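/- Let ω > 0, r₁, r₂ > 0, A₁, A₂ > 0. The function f(z₁,z₂) = log(ω + (r₁r₂/((A₁+z₁)(A₂+z₂))) / (1 + r₁/(A₁+z₁) + r₂/(A₂+z₂))) is convex on the domain {(z₁,z₂) : z₁ > -A₁, z₂ > -A₂}. -/

import Mathlib

open Set Real

private lemma lin_comp_convex {t : Set ℝ} {F : ℝ → ℝ} (hF : ConvexOn ℝ t F)
    {D : Set (ℝ × ℝ)} (hD : Convex ℝ D) (T : (ℝ × ℝ) →ₗ[ℝ] ℝ) (c : ℝ)
    (hmap : ∀ z ∈ D, c + T z ∈ t) : ConvexOn ℝ D (fun z => F (c + T z)) := by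
  refine ⟨hD, fun x hx y hy a b ha hb hab => ?_⟩
  have key : c + T (a • x + b • y) = a • (c + T x) + b • (c + T y) := by
    simp only [map_add, map_smul, smul_eq_mul]
    linear_combination (-c) * hab
  beta_reduce
  rw [key]
  exact hF.2 (hmap x hx) (hmap y hy) ha hb hab

private lemma lin_comp_concave {t : Set ℝ} {F : ℝ → ℝ} (hF : ConcaveOn ℝ t F)
    {D : Set (ℝ × ℝ)} (hD : Convex ℝ D) (T : (ℝ × ℝ) →ₗ[ℝ] ℝ) (c : ℝ)
    (hmap : ∀ z ∈ D, c + T z ∈ t) : ConcaveOn ℝ D (fun z => F (c + T z)) := by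
  refine ⟨hD, fun x hx y hy a b ha hb hab => ?_⟩
  have key : c + T (a • x + b • y) = a • (c + T x) + b • (c + T y) := by
    simp only [map_add, map_smul, smul_eq_mul]
    linear_combination (-c) * hab
  beta_reduce
  rw [key]
  exact hF.2 (hmap x hx) (hmap y hy) ha hb hab

private lemma comp_mono {h : ℝ → ℝ} (hconv : ConvexOn ℝ Set.univ h) (hmono : Monotone h)
    {D : Set (ℝ × ℝ)} {G : ℝ × ℝ → ℝ} (hG : ConvexOn ℝ D G) :
    ConvexOn ℝ D (fun z => h (G z)) :=
  ⟨hG.1, fun x hx y hy a b ha hb hab =>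
    (hmono (hG.2 hx hy ha hb hab)).trans (hconv.2 (mem_univ _) (mem_univ _) ha hb hab)⟩

private lemma comp_anti {S : Set ℝ} (hS : Convex ℝ S) {φ : ℝ → ℝ} (hφ : ConvexOn ℝ S φ)
    (hanti : AntitoneOn φ S) {D : Set (ℝ × ℝ)} {ℓ : ℝ × ℝ → ℝ} (hℓ : ConcaveOn ℝ D ℓ)
    (hmap : ∀ z ∈ D, ℓ z ∈ S) : ConvexOn ℝ D (fun z => φ (ℓ z)) := by
  refine ⟨hℓ.1, fun x hx y hy a b ha hb hab => ?_⟩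
  have h1 : a • ℓ x + b • ℓ y ≤ ℓ (a • x + b • y) := hℓ.2 hx hy ha hb hab
  have hm1 : ℓ x ∈ S := hmap x hx
  have hm2 : ℓ y ∈ S := hmap y hy
  have hmix : a • ℓ x + b • ℓ y ∈ S := hS hm1 hm2 ha hb hab
  have hmc : ℓ (a • x + b • y) ∈ S := hmap _ (hℓ.1 hx hy ha hb hab)
  calc φ (ℓ (a • x + b • y)) ≤ φ (a • ℓ x + b • ℓ y) := hanti hmix hmc h1
    _ ≤ a • φ (ℓ x) + b • φ (ℓ y) := hφ.2 hm1 hm2 ha hb hab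

-- outer function log(ω + exp t)
private lemma outer_convex {ω : ℝ} (hω : 0 < ω) :
    ConvexOn ℝ Set.univ (fun t => Real.log (ω + Real.exp t)) := by
  have hder : ∀ t : ℝ, HasDerivAt (fun t => Real.log (ω + Real.exp t))
      (Real.exp t / (ω + Real.exp t)) t := by
    intro t
    exact ((Real.hasDerivAt_exp t).const_add ω).log (by positivity)
  have hdiff : Differentiable ℝ (fun t => Real.log (ω + Real.exp t)) :=
    fun t => (hder t).differentiableAt
  apply Monotone.convexOn_univ_of_deriv hdiff
  have heq : deriv (fun t => Real.log (ω + Real.exp t)) =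
      fun t => Real.exp t / (ω + Real.exp t) := funext fun t => (hder t).deriv
  rw [heq]
  intro s t hst
  rw [div_le_div_iff₀ (by positivity) (by positivity)]
  nlinarith [Real.exp_le_exp.2 hst, Real.exp_pos s, Real.exp_pos t]

private lemma outer_mono {ω : ℝ} (hω : 0 < ω) :
    Monotone (fun t => Real.log (ω + Real.exp t)) := by
  intro s t hst
  have := Real.exp_le_exp.2 hst
  have h1 : (0:ℝ) < ω + Real.exp s := by positivity
  exact Real.log_le_log h1 (by linarith)

-- the function φ x = -log (1 - c exp (-x)) on Ioi (log c)
private lemma phi_small {c : ℝ} (hc : 0 < c) {x : ℝ} (hx : x ∈ Ioi (Real.log c)) :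
    c * Real.exp (-x) < 1 := by
  have : c * Real.exp (-x) = Real.exp (Real.log c + -x) := by
    rw [Real.exp_add, Real.exp_log hc]
  rw [this, ← Real.exp_zero]
  exact Real.exp_lt_exp.2 (by simpa using by linarith [mem_Ioi.1 hx])

private lemma phi_hasDeriv {c : ℝ} (hc : 0 < c) {x : ℝ} (hx : x ∈ Ioi (Real.log c)) :
    HasDerivAt (fun x => -Real.log (1 - c * Real.exp (-x)))
      (-(c * Real.exp (-x) / (1 - c * Real.exp (-x)))) x := by
  have hX : 0 < 1 - c * Real.exp (-x) := by linarith [phi_small hc hx]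
  have e1 : HasDerivAt (fun x : ℝ => Real.exp (-x)) (-Real.exp (-x)) x := by
    simpa [Function.comp_def] using (Real.hasDerivAt_exp (-x)).comp x (hasDerivAt_neg x)
  have d1 : HasDerivAt (fun x => 1 - c * Real.exp (-x)) (c * Real.exp (-x)) x := by
    have := (e1.const_mul c).const_sub 1
    simpa using this
  exact (d1.log hX.ne').neg

private lemma phi_convex {c : ℝ} (hc : 0 < c) :
    ConvexOn ℝ (Ioi (Real.log c)) (fun x => -Real.log (1 - c * Real.exp (-x))) := by
  have hdiff : DifferentiableOn ℝ (fun x => -Real.log (1 - c * Real.exp (-x)))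
      (Ioi (Real.log c)) := fun x hx => (phi_hasDeriv hc hx).differentiableAt.differentiableWithinAt
  apply MonotoneOn.convexOn_of_deriv (convex_Ioi _) hdiff.continuousOn
    (by rwa [interior_Ioi])
  rw [interior_Ioi]
  intro x hx y hy hxy
  rw [(phi_hasDeriv hc hx).deriv, (phi_hasDeriv hc hy).deriv]
  have hx1 := phi_small hc hx
  have hy1 := phi_small hc hy
  have hxp : 0 < c * Real.exp (-x) := by positivity
  have hyp : 0 < c * Real.exp (-y) := by positivity
  have hle : c * Real.exp (-y) ≤ c * Real.exp (-x) :=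
    mul_le_mul_of_nonneg_left (Real.exp_le_exp.2 (by linarith)) hc.le
  rw [neg_le_neg_iff, div_le_div_iff₀ (by linarith) (by linarith)]
  nlinarith

private lemma phi_anti {c : ℝ} (hc : 0 < c) :
    AntitoneOn (fun x => -Real.log (1 - c * Real.exp (-x))) (Ioi (Real.log c)) := by
  intro x hx y hy hxy
  have hx1 := phi_small hc hx
  have hle : c * Real.exp (-y) ≤ c * Real.exp (-x) :=
    mul_le_mul_of_nonneg_left (Real.exp_le_exp.2 (by linarith)) hc.le
  have hX : 0 < 1 - c * Real.exp (-x) := by linarith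
  exact neg_le_neg (Real.log_le_log hX (by linarith))

theorem stmt_6 (ω r₁ r₂ A₁ A₂ : ℝ) (hω : 0 < ω) (hr₁ : 0 < r₁) (hr₂ : 0 < r₂)
    (hA₁ : 0 < A₁) (hA₂ : 0 < A₂) :
    ConvexOn ℝ {z : ℝ × ℝ | -A₁ < z.1 ∧ -A₂ < z.2}
      (fun z : ℝ × ℝ =>
        Real.log (ω + (r₁ * r₂ / ((A₁ + z.1) * (A₂ + z.2))) /
          (1 + r₁ / (A₁ + z.1) + r₂ / (A₂ + z.2)))) := by
  set c : ℝ := r₁ * r₂ with hcdef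
  have hc : 0 < c := mul_pos hr₁ hr₂
  set D : Set (ℝ × ℝ) := {z : ℝ × ℝ | -A₁ < z.1 ∧ -A₂ < z.2} with hDdef
  have hD : Convex ℝ D := (convex_Ioi (-A₁)).prod (convex_Ioi (-A₂))
  have hu : ∀ z ∈ D, 0 < A₁ + z.1 := fun z hz => by linarith [hz.1]
  have hv : ∀ z ∈ D, 0 < A₂ + z.2 := fun z hz => by linarith [hz.2]
  have hp : ∀ z ∈ D, 0 < (A₁ + r₁) + z.1 := fun z hz => by linarith [hz.1]
  have hq : ∀ z ∈ D, 0 < (A₂ + r₂) + z.2 := fun z hz => by linarith [hz.2]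
  -- the concave inner function ℓ
  have hlog1 : ConcaveOn ℝ D (fun z : ℝ × ℝ => Real.log ((A₁ + r₁) + z.1)) :=
    lin_comp_concave strictConcaveOn_log_Ioi.concaveOn hD (LinearMap.fst ℝ ℝ ℝ) (A₁ + r₁)
      (fun z hz => hp z hz)
  have hlog2 : ConcaveOn ℝ D (fun z : ℝ × ℝ => Real.log ((A₂ + r₂) + z.2)) :=
    lin_comp_concave strictConcaveOn_log_Ioi.concaveOn hD (LinearMap.snd ℝ ℝ ℝ) (A₂ + r₂)
      (fun z hz => hq z hz)
  have hℓ : ConcaveOn ℝ D (fun z : ℝ × ℝ =>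
      Real.log ((A₁ + r₁) + z.1) + Real.log ((A₂ + r₂) + z.2)) := hlog1.add hlog2
  have hmap : ∀ z ∈ D, Real.log ((A₁ + r₁) + z.1) + Real.log ((A₂ + r₂) + z.2)
      ∈ Ioi (Real.log c) := by
    intro z hz
    have h1 := hp z hz; have h2 := hq z hz
    have h3 : c < ((A₁ + r₁) + z.1) * ((A₂ + r₂) + z.2) := by
      have := hu z hz; have := hv z hz
      nlinarith [hu z hz, hv z hz]
    rw [mem_Ioi, ← Real.log_mul h1.ne' h2.ne']
    exact Real.log_lt_log hc h3
  -- convex pieces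
  have c0 : ConvexOn ℝ D (fun _ : ℝ × ℝ => Real.log c) := convexOn_const _ hD
  have c1 : ConvexOn ℝ D (fun z : ℝ × ℝ => -Real.log ((A₁ + r₁) + z.1)) :=
    lin_comp_convex strictConcaveOn_log_Ioi.concaveOn.neg hD (LinearMap.fst ℝ ℝ ℝ) (A₁ + r₁)
      (fun z hz => hp z hz)
  have c2 : ConvexOn ℝ D (fun z : ℝ × ℝ => -Real.log ((A₂ + r₂) + z.2)) :=
    lin_comp_convex strictConcaveOn_log_Ioi.concaveOn.neg hD (LinearMap.snd ℝ ℝ ℝ) (A₂ + r₂)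
      (fun z hz => hq z hz)
  have c3 : ConvexOn ℝ D (fun z : ℝ × ℝ =>
      -Real.log (1 - c * Real.exp (-(Real.log ((A₁ + r₁) + z.1) + Real.log ((A₂ + r₂) + z.2))))) :=
    comp_anti (convex_Ioi _) (phi_convex hc) (phi_anti hc) hℓ hmap
  have hG : ConvexOn ℝ D (fun z : ℝ × ℝ =>
      Real.log c + -Real.log ((A₁ + r₁) + z.1) + -Real.log ((A₂ + r₂) + z.2) +
        -Real.log (1 - c * Real.exp
          (-(Real.log ((A₁ + r₁) + z.1) + Real.log ((A₂ + r₂) + z.2))))) := by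
    have := ((c0.add c1).add c2).add c3
    exact this.congr (fun z hz => by simp [Pi.add_apply])
  have hF : ConvexOn ℝ D (fun z : ℝ × ℝ => Real.log (ω + Real.exp
      (Real.log c + -Real.log ((A₁ + r₁) + z.1) + -Real.log ((A₂ + r₂) + z.2) +
        -Real.log (1 - c * Real.exp
          (-(Real.log ((A₁ + r₁) + z.1) + Real.log ((A₂ + r₂) + z.2))))))) :=
    comp_mono (outer_convex hω) (outer_mono hω) hG
  apply hF.congr
  intro z hz
  simp only
  have hu' := hu z hz; have hv' := hv z hz
  have hp' := hp z hz; have hq' := hq z hz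
  have hpq : 0 < ((A₁ + r₁) + z.1) * ((A₂ + r₂) + z.2) := mul_pos hp' hq'
  have hcpq : c < ((A₁ + r₁) + z.1) * ((A₂ + r₂) + z.2) := by nlinarith
  have hE : Real.exp (-(Real.log ((A₁ + r₁) + z.1) + Real.log ((A₂ + r₂) + z.2))) =
      (((A₁ + r₁) + z.1) * ((A₂ + r₂) + z.2))⁻¹ := by
    rw [← Real.log_mul hp'.ne' hq'.ne', Real.exp_neg, Real.exp_log hpq]
  have hXpos : 0 < 1 - c * (((A₁ + r₁) + z.1) * ((A₂ + r₂) + z.2))⁻¹ := by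
    rw [sub_pos, ← div_eq_mul_inv, div_lt_one hpq]; exact hcpq
  have hexp : Real.exp
      (Real.log c + -Real.log ((A₁ + r₁) + z.1) + -Real.log ((A₂ + r₂) + z.2) +
        -Real.log (1 - c * Real.exp
          (-(Real.log ((A₁ + r₁) + z.1) + Real.log ((A₂ + r₂) + z.2))))) =
      c * ((A₁ + r₁) + z.1)⁻¹ * ((A₂ + r₂) + z.2)⁻¹ *
        (1 - c * (((A₁ + r₁) + z.1) * ((A₂ + r₂) + z.2))⁻¹)⁻¹ := by
    rw [hE, Real.exp_add, Real.exp_add, Real.exp_add, Real.exp_log hc,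
      Real.exp_neg, Real.exp_neg, Real.exp_neg, Real.exp_log hp', Real.exp_log hq',
      Real.exp_log hXpos]
  rw [hexp]
  congr 1
  have hden : 0 < 1 + r₁ / (A₁ + z.1) + r₂ / (A₂ + z.2) := by positivity
  have hW : 0 < (A₁ + r₁ + z.1) * (A₂ + r₂ + z.2) - r₁ * r₂ := by nlinarith
  have key : (1 : ℝ) - c * ((A₁ + r₁ + z.1) * (A₂ + r₂ + z.2))⁻¹
      = ((A₁ + r₁ + z.1) * (A₂ + r₂ + z.2) - r₁ * r₂) / ((A₁ + r₁ + z.1) * (A₂ + r₂ + z.2)) := by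
    rw [hcdef]; field_simp
  rw [key, inv_div, hcdef]
  field_simp
  ring
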